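/- Goals are not closed under modus ponens inside a single goal: there exist propositional formulas φ, ψ and a mental state ⟨Σ,Γ⟩ such that ⟨Σ,Γ⟩ ⊨_M G(φ ∧ (φ→ψ)) but ⟨Σ,Γ⟩ ⊭_M Gψ; hence ⊭_M G(φ ∧ (φ→ψ)) → Gψ. -/

import Mathlib

/- Core: propositional language, classical entailment, mental states,
   mental state formulas and their semantics. -/

inductive PForm : Type where
  | atom : Nat → PForm
  | fals : PForm
  | impl : PForm → PForm → PForm

namespace PForm

def neg (p : PForm) : PForm := p.impl PForm.fals

def conj (p q : PForm) : PForm := (p.impl q.neg).neg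

def iffF (p q : PForm) : PForm := (p.impl q).conj (q.impl p)

def eval (v : Nat → Bool) : PForm → Bool
  | atom n => v n
  | fals => false
  | impl p q => !(p.eval v) || q.eval v

end PForm

/-- Classical semantic entailment `Γ ⊨_C φ`. -/
def CEntails (Γ : Set PForm) (φ : PForm) : Prop :=
  ∀ v : Nat → Bool, (∀ ψ ∈ Γ, ψ.eval v = true) → φ.eval v = true

/-- `⊨_C φ`. -/
def Taut (φ : PForm) : Prop := CEntails ∅ φ

/-- A pair ⟨Σ,Γ⟩ of a belief base and a goal base. -/
structure MState : Type where
  bel : Set PForm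
  goals : Set PForm

/-- The conditions making a pair ⟨Σ,Γ⟩ a mental state. -/
def IsMState (m : MState) : Prop :=
  ¬ CEntails m.bel PForm.fals ∧
  ∀ γ ∈ m.goals,
    (¬ CEntails m.bel γ ∧ ¬ Taut γ.neg) ∧
    ∀ γ' : PForm, Taut (γ.impl γ') → ¬ CEntails m.bel γ' → ¬ Taut γ'.neg →
      γ' ∈ m.goals

/-- Mental state formulas: Boolean combinations of atoms `B φ` and `G φ`. -/
inductive MForm : Type where
  | B : PForm → MForm
  | G : PForm → MForm
  | fals : MForm
  | impl : MForm → MForm → MForm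

namespace MForm

def neg (χ : MForm) : MForm := χ.impl MForm.fals
def conj (a b : MForm) : MForm := (a.impl b.neg).neg
def disj (a b : MForm) : MForm := a.neg.impl b
def iffF (a b : MForm) : MForm := (a.impl b).conj (b.impl a)

end MForm

/-- Truth of a mental state formula in a mental state: `⟨Σ,Γ⟩ ⊨_M χ`. -/
def MSat (m : MState) : MForm → Prop
  | .B φ => CEntails m.bel φ
  | .G φ => φ ∈ m.goals
  | .fals => False
  | .impl a b => MSat m a → MSat m b

/-- `⊨_M χ`: truth in every mental state. -/
def MValid (χ : MForm) : Prop := ∀ m : MState, IsMState m → MSat m χ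


def wPhi : PForm := .atom 0
def wPsi : PForm := .atom 1
def wChi : PForm := wPhi.conj (wPhi.impl wPsi)
def wBel : Set PForm := {wPsi}
def wGoals : Set PForm :=
  {γ' | Taut (wChi.impl γ') ∧ ¬ CEntails wBel γ' ∧ ¬ Taut γ'.neg}
def wM : MState := ⟨wBel, wGoals⟩

lemma bel_consistent : ¬ CEntails wBel PForm.fals := by
  intro h
  have := h (fun _ => true) (by rintro ψ rfl; rfl)
  simp [PForm.eval] at this

lemma taut_trans {a b c : PForm} (h1 : Taut (a.impl b)) (h2 : Taut (b.impl c)) :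
    Taut (a.impl c) := by
  intro v hv
  have e1 := h1 v hv
  have e2 := h2 v hv
  simp [PForm.eval] at e1 e2 ⊢
  cases h : PForm.eval v b <;> simp_all

lemma wM_is : IsMState wM := by
  refine ⟨bel_consistent, ?_⟩
  rintro γ ⟨h1, h2, h3⟩
  refine ⟨⟨h2, h3⟩, ?_⟩
  intro γ' ht hc hn
  exact ⟨taut_trans h1 ht, hc, hn⟩

lemma chi_in_goals : wChi ∈ wGoals := by
  refine ⟨?_, ?_, ?_⟩
  · intro v hv
    simp [PForm.eval]
  · intro h
    have := h (fun n => n == 1) (by rintro ψ rfl; rfl)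
    simp [PForm.eval, wChi, wPhi, wPsi, PForm.conj, PForm.neg] at this
  · intro h
    have := h (fun _ => true) (by intro ψ h; simp at h)
    simp [PForm.eval, wChi, wPhi, wPsi, PForm.conj, PForm.neg] at this

lemma psi_not_in_goals : wPsi ∉ wGoals := by
  rintro ⟨-, h2, -⟩
  exact h2 (fun v hv => hv wPsi rfl)

/-- Goals are not closed under modus ponens inside a single
goal. -/

theorem goal_not_closed_under_mp :
    (∃ (φ ψ : PForm) (m : MState), IsMState m ∧
      MSat m (MForm.G (φ.conj (φ.impl ψ))) ∧ ¬ MSat m (MForm.G ψ)) ∧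
    ∃ φ ψ : PForm,
      ¬ MValid ((MForm.G (φ.conj (φ.impl ψ))).impl (MForm.G ψ)) := by
  constructor
  · exact ⟨wPhi, wPsi, wM, wM_is, chi_in_goals, psi_not_in_goals⟩
  · refine ⟨wPhi, wPsi, fun h => ?_⟩
    exact psi_not_in_goals (h wM wM_is chi_in_goals)
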